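/- Let p ≥ 1, let A_1,…,A_p, B_1,…,B_p be strictly positive and a_1,…,a_p, b_1,…,b_p be nonnegative reals, and set P(u) = Σ_{i=1}^p e^{−a_i u/A_i}/(1 − e^{−u/A_i}) − Σ_{i=1}^p e^{−b_i u/B_i}/(1 − e^{−u/B_i}) for u > 0. Suppose that 0 ≤ a_1/A_1 ≤ a_2/A_2 ≤ … ≤ a_p/A_p, 0 ≤ b_1/B_1 ≤ b_2/B_2 ≤ … ≤ b_p/B_p, 0 < 1/A_1 ≤ 1/A_2 ≤ … ≤ 1/A_p, 0 < 1/B_1 ≤ 1/B_2 ≤ … ≤ 1/B_p, and that for every k = 1,…,p one has Σ_{i=1}^k a_i/A_i ≤ Σ_{i=1}^k b_i/B_i and Σ_{i=1}^k 1/A_i ≤ Σ_{i=1}^k 1/B_i. Then P(u) ≥ 0 for all u > 0. -/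

import Mathlib

open Finset Real

lemma abel_nonneg (g e : ℕ → ℝ) (hg0 : ∀ i, 0 ≤ g i) (hgm : ∀ i, g (i+1) ≤ g i)
    (n : ℕ) (hS : ∀ k, k ≤ n → 0 ≤ ∑ i ∈ range k, e i) :
    0 ≤ ∑ i ∈ range n, g i * e i := by
  have key : ∀ m, m ≤ n → g m * (∑ i ∈ range m, e i) ≤ ∑ i ∈ range m, g i * e i := by
    intro m hm
    induction m with
    | zero => simp
    | succ m ih =>
      have hm' : m ≤ n := Nat.le_of_succ_le hm
      have h1 := ih hm'
      have h2 : g (m+1) * (∑ i ∈ range (m+1), e i) ≤ g m * (∑ i ∈ range (m+1), e i) :=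
        mul_le_mul_of_nonneg_right (hgm m) (hS (m+1) hm)
      calc g (m+1) * (∑ i ∈ range (m+1), e i)
          ≤ g m * (∑ i ∈ range (m+1), e i) := h2
        _ = g m * (∑ i ∈ range m, e i) + g m * e m := by rw [sum_range_succ]; ring
        _ ≤ (∑ i ∈ range m, g i * e i) + g m * e m := by linarith
        _ = ∑ i ∈ range (m+1), g i * e i := by rw [sum_range_succ]
  have h := key n le_rfl
  have h2 : 0 ≤ g n * (∑ i ∈ range n, e i) := mul_nonneg (hg0 n) (hS n le_rfl)
  linarith

lemma kara (p : ℕ) (x y : ℕ → ℝ) (hy : ∀ i, y i ≤ y (i+1))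
    (hS : ∀ k, k ≤ p → ∑ i ∈ range k, x i ≤ ∑ i ∈ range k, y i) (u : ℝ) (hu : 0 < u) :
    ∑ i ∈ range p, Real.exp (-(y i) * u) ≤ ∑ i ∈ range p, Real.exp (-(x i) * u) := by
  have point : ∀ i, exp (-(y i)*u) + (u * exp (-(y i)*u)) * (y i - x i) ≤ exp (-(x i)*u) := by
    intro i
    have h := Real.add_one_le_exp ((y i - x i) * u)
    have he : exp (-(x i)*u) = exp (-(y i)*u) * exp ((y i - x i)*u) := by
      rw [← exp_add]; ring_nf
    rw [he]
    nlinarith [exp_pos (-(y i)*u)]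
  have hsum := Finset.sum_le_sum (fun i (_ : i ∈ range p) => point i)
  rw [Finset.sum_add_distrib] at hsum
  have habel : 0 ≤ ∑ i ∈ range p, (u * exp (-(y i)*u)) * (y i - x i) := by
    apply abel_nonneg
    · intro i; positivity
    · intro i
      have : exp (-(y (i+1))*u) ≤ exp (-(y i)*u) := by
        apply exp_le_exp.mpr; nlinarith [hy i]
      have hu' := hu.le
      nlinarith
    · intro k hk
      rw [Finset.sum_sub_distrib]
      linarith [hS k hk]
  linarith

lemma geom_term (α β u : ℝ) (hβ : 0 < β) (hu : 0 < u) :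
    Real.exp (-α*u) / (1 - Real.exp (-β*u)) = ∑' n : ℕ, Real.exp (-(α + n*β)*u) := by
  have hr0 : 0 < Real.exp (-β*u) := exp_pos _
  have hr1 : Real.exp (-β*u) < 1 := by
    rw [Real.exp_lt_one_iff]; nlinarith
  have hterm : ∀ n : ℕ, Real.exp (-(α + n*β)*u) = Real.exp (-α*u) * Real.exp (-β*u) ^ n := by
    intro n
    rw [← Real.exp_nat_mul, ← Real.exp_add]
    ring_nf
  rw [tsum_congr hterm, tsum_mul_left, tsum_geometric_of_lt_one hr0.le hr1]
  rw [div_eq_mul_inv]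

lemma summable_term (α β u : ℝ) (hβ : 0 < β) (hu : 0 < u) :
    Summable (fun n : ℕ => Real.exp (-(α + n*β)*u)) := by
  have hr0 : 0 < Real.exp (-β*u) := exp_pos _
  have hr1 : Real.exp (-β*u) < 1 := by
    rw [Real.exp_lt_one_iff]; nlinarith
  have hterm : ∀ n : ℕ, Real.exp (-(α + n*β)*u) = Real.exp (-α*u) * Real.exp (-β*u) ^ n := by
    intro n; rw [← Real.exp_nat_mul, ← Real.exp_add]; ring_nf
  simp_rw [hterm]
  exact (summable_geometric_of_lt_one hr0.le hr1).mul_left _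

lemma sum_Iic_eq_range {p : ℕ} (f : Fin p → ℝ) (F : ℕ → ℝ)
    (hF : ∀ i : Fin p, F i.1 = f i) (k : Fin p) :
    ∑ i ∈ Finset.Iic k, f i = ∑ i ∈ Finset.range (k.1+1), F i := by
  refine Finset.sum_bij' (fun (i : Fin p) (_ : i ∈ Finset.Iic k) => (i : ℕ))
    (fun (j : ℕ) (hj : j ∈ Finset.range (k.1+1)) =>
      (⟨j, lt_of_lt_of_le (Finset.mem_range.mp hj) k.2⟩ : Fin p))
    ?_ ?_ ?_ ?_ ?_
  · intro i hi; simp at hi ⊢; omega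
  · intro j hj; simp at hj ⊢; simp [Fin.le_def]; omega
  · intro i hi; rfl
  · intro j hj; rfl
  · intro i hi; exact (hF i).symm

lemma side {p : ℕ} (A a : Fin p → ℝ) (hA : ∀ i, 0 < A i) (u : ℝ) (hu : 0 < u)
    (idx : ℕ → Fin p) (hidx : ∀ i : Fin p, idx i.1 = i) :
    (∑ i, Real.exp (-a i * u / A i) / (1 - Real.exp (-u / A i)))
      = ∑' n : ℕ, ∑ i ∈ Finset.range p,
          Real.exp (-(a (idx i) / A (idx i) + n * (1 / A (idx i))) * u) := by
  have h1 : ∀ i : Fin p, Real.exp (-a i * u / A i) / (1 - Real.exp (-u / A i)) =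
      (fun j : ℕ => Real.exp (-(a (idx j) / A (idx j)) * u)
        / (1 - Real.exp (-(1 / A (idx j)) * u))) i.1 := by
    intro i; simp only; rw [hidx i]
    have e1 : -a i * u / A i = -(a i / A i) * u := by ring
    have e2 : -u / A i = -(1 / A i) * u := by ring
    rw [e1, e2]
  rw [Finset.sum_congr rfl (fun i _ => h1 i),
    Fin.sum_univ_eq_sum_range (fun j : ℕ => Real.exp (-(a (idx j) / A (idx j)) * u)
      / (1 - Real.exp (-(1 / A (idx j)) * u))) p]
  rw [Finset.sum_congr rfl
    (fun i _ => geom_term (a (idx i) / A (idx i)) (1 / A (idx i)) u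
      (one_div_pos.mpr (hA _)) hu)]
  exact (Summable.tsum_finsetSum (fun i _ =>
    summable_term (a (idx i) / A (idx i)) (1 / A (idx i)) u (one_div_pos.mpr (hA _)) hu)).symm

theorem stmt12 (p : ℕ) (hp : 1 ≤ p)
    (A B a b : Fin p → ℝ)
    (hA : ∀ i, 0 < A i) (hB : ∀ i, 0 < B i)
    (ha : ∀ i, 0 ≤ a i) (hb : ∀ i, 0 ≤ b i)
    (P : ℝ → ℝ)
    (hP : ∀ u, P u = (∑ i, Real.exp (-a i * u / A i) / (1 - Real.exp (-u / A i))) -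
      ∑ i, Real.exp (-b i * u / B i) / (1 - Real.exp (-u / B i)))
    (haA : ∀ i j : Fin p, i ≤ j → a i / A i ≤ a j / A j)
    (hbB : ∀ i j : Fin p, i ≤ j → b i / B i ≤ b j / B j)
    (hiA : ∀ i j : Fin p, i ≤ j → 1 / A i ≤ 1 / A j)
    (hiB : ∀ i j : Fin p, i ≤ j → 1 / B i ≤ 1 / B j)
    (hmaj1 : ∀ k : Fin p, ∑ i ∈ Finset.Iic k, a i / A i ≤ ∑ i ∈ Finset.Iic k, b i / B i)
    (hmaj2 : ∀ k : Fin p, ∑ i ∈ Finset.Iic k, 1 / A i ≤ ∑ i ∈ Finset.Iic k, 1 / B i) :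
    ∀ u > (0 : ℝ), 0 ≤ P u := by
  intro u hu
  rw [hP u]
  have hp1 : p - 1 < p := by omega
  set idx : ℕ → Fin p := fun i => ⟨min i (p-1), by omega⟩ with hidxdef
  have hidx : ∀ i : Fin p, idx i.1 = i := by
    intro i
    apply Fin.ext
    simp only [hidxdef]
    have := i.2
    omega
  have hmono : ∀ i j : ℕ, i ≤ j → idx i ≤ idx j := by
    intro i j h
    simp only [hidxdef, Fin.mk_le_mk]
    omega
  rw [side A a hA u hu idx hidx, side B b hB u hu idx hidx]
  rw [← Summable.tsum_sub
    (summable_sum (fun i _ => summable_term (a (idx i) / A (idx i)) (1 / A (idx i)) u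
      (one_div_pos.mpr (hA _)) hu))
    (summable_sum (fun i _ => summable_term (b (idx i) / B (idx i)) (1 / B (idx i)) u
      (one_div_pos.mpr (hB _)) hu))]
  apply tsum_nonneg
  intro n
  rw [sub_nonneg]
  apply kara p (fun i => a (idx i) / A (idx i) + n * (1 / A (idx i)))
    (fun i => b (idx i) / B (idx i) + n * (1 / B (idx i)))
  · intro i
    have h1 := hbB (idx i) (idx (i+1)) (hmono i (i+1) (by omega))
    have h2 := hiB (idx i) (idx (i+1)) (hmono i (i+1) (by omega))
    have hn : (0:ℝ) ≤ (n:ℝ) := Nat.cast_nonneg n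
    nlinarith
  · intro k hk
    match k with
    | 0 => simp
    | (m+1) =>
      set kf : Fin p := ⟨m, by omega⟩ with hkf
      have hxa : ∑ i ∈ Finset.range (m+1), (a (idx i) / A (idx i) + n * (1 / A (idx i)))
          = ∑ i ∈ Finset.Iic kf, (a i / A i + n * (1 / A i)) := by
        refine (sum_Iic_eq_range _ _ ?_ kf).symm
        intro i; rw [hidx i]
      have hxb : ∑ i ∈ Finset.range (m+1), (b (idx i) / B (idx i) + n * (1 / B (idx i)))
          = ∑ i ∈ Finset.Iic kf, (b i / B i + n * (1 / B i)) := by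
        refine (sum_Iic_eq_range _ _ ?_ kf).symm
        intro i; rw [hidx i]
      rw [hxa, hxb, Finset.sum_add_distrib, Finset.sum_add_distrib, ← Finset.mul_sum,
        ← Finset.mul_sum]
      exact add_le_add (hmaj1 kf)
        (mul_le_mul_of_nonneg_left (hmaj2 kf) (Nat.cast_nonneg n))
  · exact hu
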